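/- arXiv:1912.02558 — 2 statements merged into one kernel-verified Lean document; each statement's English description precedes it below -/
import Mathlib

section
/- Fixation on the backbone: if γ_k^{(x,n)}(j) ∈ C for some k ≥ 0 and j ≤ k, where C is the backbone of the oriented percolation cluster, then γ_m^{(x,n)}(j) = γ_k^{(x,n)}(j) for all m > k. -/
/-- A space-time site of `ℤ^d × ℤ`. -/
abbrev Site (d : ℕ) := (Fin d → ℤ) × ℤ

/-- The neighbourhood `U(x,n) = {(y,n+1) : ‖x − y‖_∞ ≤ 1}` of a site in the next generation. -/
def nbhd {d : ℕ} (p : Site d) : Set (Site d) :=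
  {q | q.2 = p.2 + 1 ∧ ∀ i, |p.1 i - q.1 i| ≤ 1}

/-- There is a directed open path of length `k` starting at `p` (all `k+1` sites on it open). -/
def hasOpenPath {d : ℕ} (ω : Site d → Bool) (p : Site d) (k : ℕ) : Prop :=
  ∃ γ : ℕ → (Fin d → ℤ), γ 0 = p.1 ∧
    (∀ j < k, ∀ i, |γ (j + 1) i - γ j i| ≤ 1) ∧
    (∀ j ≤ k, ω (γ j, p.2 + (j : ℤ)) = true)

/-- `ellSucc ω p` is `ℓ(p) + 1`, where `ℓ(p)` is the length of the longest directed open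
path starting at `p` (with `ℓ(p) = −1`, i.e. `ellSucc ω p = 0`, at closed sites, and
`ℓ(p) = ∞` on the backbone).  Shifting by one lets us work in `ℕ∞` instead of `{−1} ∪ ℕ∞`. -/
noncomputable def ellSucc {d : ℕ} (ω : Site d → Bool) (p : Site d) : ℕ∞ :=
  sSup {t : ℕ∞ | ∃ k : ℕ, t = (k : ℕ∞) + 1 ∧ hasOpenPath ω p k}

/-- The backbone `C` of the oriented percolation cluster: sites where `ℓ = ∞`. -/
def backbone {d : ℕ} (ω : Site d → Bool) : Set (Site d) := {p | ellSucc ω p = ⊤}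

/-- `maximizers ω (k+1) p` is the set `M_k(p)` of maximisers over `U(p)` of the truncated
length `ℓ_k = ℓ ∧ k` (in the shifted encoding: of `min (ℓ + 1) (k + 1)`), and
`maximizers ω 0 p = M_{−1}(p) = U(p)`. -/
noncomputable def maximizers {d : ℕ} (ω : Site d → Bool) : ℕ → Site d → Set (Site d)
  | 0, p => nbhd p
  | k + 1, p =>
      {q ∈ nbhd p |
        min (ellSucc ω q) ((k : ℕ∞) + 1) =
          sSup ((fun r => min (ellSucc ω r) ((k : ℕ∞) + 1)) '' nbhd p)}

/-- `sel` is a valid local-selection rule for the random permutations encoded by the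
rank function `rank`: `rank p` enumerates the neighbourhood `U(p)` injectively (this is
the permutation `ω̃(p)`), and `sel k p` is the element of `maximizers ω k p`
(i.e. of `M_{k-1}(p)`, with `sel 0 p ∈ M_{−1}(p) = U(p)`) appearing first in this
permutation. -/
def IsSelection {d : ℕ} (ω : Site d → Bool) (rank : Site d → Site d → ℕ)
    (sel : ℕ → Site d → Site d) : Prop :=
  (∀ p : Site d, Set.InjOn (rank p) (nbhd p)) ∧
    ∀ (k : ℕ) (p : Site d),
      sel k p ∈ maximizers ω k p ∧ ∀ q ∈ maximizers ω k p, rank p (sel k p) ≤ rank p q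

/-- The locally constructed path `γ_k^{(x,n)}` of length `k` started at `p = (x,n)`:
`γ_k(0) = p` and `γ_k(j+1) = m_{k−j−2}(γ_k(j))`, where `m_i` is the first element of
`M_i` in the permutation (in the shifted indexing, `γ_k(j+1) = sel (k−j−1) (γ_k(j))`). -/
def gammaPath {d : ℕ} (sel : ℕ → Site d → Site d) (p : Site d) (k : ℕ) : ℕ → Site d
  | 0 => p
  | j + 1 => sel (k - j - 1) (gammaPath sel p k j)

-- ### auxiliary lemmas

lemma ellSucc_eq_zero {d : ℕ} (ω : Site d → Bool) {q : Site d} (hq : ¬ ω q = true) :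
    ellSucc ω q = 0 := by
  have he : {t : ℕ∞ | ∃ k : ℕ, t = (k : ℕ∞) + 1 ∧ hasOpenPath ω q k} = ∅ := by
    ext t
    simp only [Set.mem_setOf_eq, Set.mem_empty_iff_false, iff_false]
    rintro ⟨k, -, γ, hγ0, -, hopen⟩
    exact hq (by simpa [hγ0] using hopen 0 (Nat.zero_le _))
  rw [ellSucc, he, sSup_empty]
  rfl

lemma hasOpenPath_prepend {d : ℕ} (ω : Site d → Bool) {q r : Site d} (hq : ω q = true)
    (hr : r ∈ nbhd q) {n : ℕ} (h : hasOpenPath ω r n) : hasOpenPath ω q (n + 1) := by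
  obtain ⟨γ, h0, hstep, hopen⟩ := h
  obtain ⟨ht, hd⟩ := hr
  refine ⟨fun j => match j with | 0 => q.1 | j + 1 => γ j, rfl, ?_, ?_⟩
  · intro j hj i
    match j with
    | 0 =>
      show |γ 0 i - q.1 i| ≤ 1
      rw [h0, abs_sub_comm]
      exact hd i
    | j + 1 => exact hstep j (by omega) i
  · intro j hj
    match j with
    | 0 => simpa using hq
    | j + 1 =>
      have hz : q.2 + ((j + 1 : ℕ) : ℤ) = r.2 + (j : ℤ) := by rw [ht]; push_cast; ring
      show ω (γ j, q.2 + ((j + 1 : ℕ) : ℤ)) = true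
      rw [hz]
      exact hopen j (by omega)

lemma hasOpenPath_tail {d : ℕ} (ω : Site d → Bool) {q : Site d} {n : ℕ}
    (h : hasOpenPath ω q (n + 1)) : ∃ r ∈ nbhd q, hasOpenPath ω r n := by
  obtain ⟨γ, h0, hstep, hopen⟩ := h
  refine ⟨(γ 1, q.2 + 1), ⟨rfl, fun i => ?_⟩, fun j => γ (j + 1), rfl, ?_, ?_⟩
  · rw [← h0, abs_sub_comm]
    exact hstep 0 (by omega) i
  · intro j hj i
    exact hstep (j + 1) (by omega) i
  · intro j hj
    have hz : q.2 + 1 + (j : ℤ) = q.2 + ((j + 1 : ℕ) : ℤ) := by push_cast; ring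
    show ω (γ (j + 1), q.2 + 1 + (j : ℤ)) = true
    rw [hz]
    exact hopen (j + 1) (by omega)

lemma ellSucc_top_of_nbhd {d : ℕ} (ω : Site d → Bool) {q r : Site d} (hq : ω q = true)
    (hr : r ∈ nbhd q) (htop : ellSucc ω r = ⊤) : ellSucc ω q = ⊤ := by
  rw [ellSucc, sSup_eq_top]
  intro b hb
  obtain ⟨a, ⟨n, rfl, hpath⟩, hba⟩ := (sSup_eq_top.mp htop) b hb
  refine ⟨((n + 1 : ℕ) : ℕ∞) + 1, ⟨n + 1, rfl, hasOpenPath_prepend ω hq hr hpath⟩, ?_⟩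
  refine lt_of_lt_of_le hba ?_
  push_cast
  exact self_le_add_right _ _

lemma ellSucc_le_of_nbhd {d : ℕ} (ω : Site d → Bool) {q : Site d} {v : ℕ∞}
    (h : ∀ r ∈ nbhd q, ellSucc ω r ≤ v) : ellSucc ω q ≤ v + 1 := by
  rw [ellSucc]
  refine sSup_le ?_
  rintro t ⟨n, rfl, hpath⟩
  match n with
  | 0 => simpa using add_le_add_right (zero_le v) 1
  | n + 1 =>
    obtain ⟨r, hr, hp⟩ := hasOpenPath_tail ω hpath
    have h1 : ((n : ℕ∞) + 1) ≤ ellSucc ω r := le_sSup ⟨n, rfl, hp⟩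
    have h2 := le_trans h1 (h r hr)
    calc ((n + 1 : ℕ) : ℕ∞) + 1 = ((n : ℕ∞) + 1) + 1 := by push_cast; ring
    _ ≤ v + 1 := add_le_add_left h2 1

lemma maximizers_subset {d : ℕ} (ω : Site d → Bool) :
    ∀ (i : ℕ) (q : Site d), maximizers ω i q ⊆ nbhd q
  | 0, q => subset_rfl
  | i + 1, q => fun r hr => hr.1

lemma maximizers_bound {d : ℕ} (ω : Site d → Bool) {b : ℕ} {q s : Site d}
    (hs : s ∈ maximizers ω (b + 1) q) (hlt : ellSucc ω s < (b : ℕ∞) + 1) :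
    ∀ r ∈ nbhd q, ellSucc ω r ≤ ellSucc ω s := by
  obtain ⟨hsn, hmax⟩ := hs
  have hmin : min (ellSucc ω s) ((b : ℕ∞) + 1) = ellSucc ω s := min_eq_left hlt.le
  intro r hr
  have h1 : min (ellSucc ω r) ((b : ℕ∞) + 1) ≤ ellSucc ω s := by
    have himg : min (ellSucc ω r) ((b : ℕ∞) + 1)
        ≤ sSup ((fun r => min (ellSucc ω r) ((b : ℕ∞) + 1)) '' nbhd q) :=
      le_sSup ⟨r, hr, rfl⟩
    rw [← hmax] at himg
    exact himg.trans (min_le_left _ _)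
  by_contra hcon
  push_neg at hcon
  exact absurd h1 (not_le.mpr (lt_min hcon hlt))

lemma sup_eq_cap {d : ℕ} (ω : Site d → Bool) {b : ℕ} {q s : Site d} (hs : s ∈ nbhd q)
    (h : (b : ℕ∞) + 1 ≤ ellSucc ω s) :
    sSup ((fun r => min (ellSucc ω r) ((b : ℕ∞) + 1)) '' nbhd q) = (b : ℕ∞) + 1 := by
  apply le_antisymm
  · refine sSup_le ?_
    rintro t ⟨r, -, rfl⟩
    exact min_le_right _ _
  · have hm : min (ellSucc ω s) ((b : ℕ∞) + 1) = (b : ℕ∞) + 1 := min_eq_right h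
    calc (b : ℕ∞) + 1 = min (ellSucc ω s) ((b : ℕ∞) + 1) := hm.symm
    _ ≤ sSup ((fun r => min (ellSucc ω r) ((b : ℕ∞) + 1)) '' nbhd q) :=
      le_sSup ⟨s, hs, rfl⟩

lemma mem_maximizers_of_cap_le {d : ℕ} (ω : Site d → Bool) {b : ℕ} {q s r : Site d}
    (hs : s ∈ nbhd q) (h : (b : ℕ∞) + 1 ≤ ellSucc ω s) (hr : r ∈ nbhd q)
    (h2 : (b : ℕ∞) + 1 ≤ ellSucc ω r) : r ∈ maximizers ω (b + 1) q :=
  ⟨hr, by rw [min_eq_right h2, sup_eq_cap ω hs h]⟩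

lemma sel_eq_of_maximizers {d : ℕ} (ω : Site d → Bool) {rank : Site d → Site d → ℕ}
    {sel : ℕ → Site d → Site d} (hsel : IsSelection ω rank sel) {i i' : ℕ} {q : Site d}
    (h1 : sel i' q ∈ maximizers ω i q) (h2 : sel i q ∈ maximizers ω i' q) :
    sel i' q = sel i q := by
  have ha := (hsel.2 i q).2 _ h1
  have hb := (hsel.2 i' q).2 _ h2
  exact hsel.1 q (maximizers_subset ω i' q (hsel.2 i' q).1)
    (maximizers_subset ω i q (hsel.2 i q).1) (le_antisymm hb ha)

lemma sel_stable {d : ℕ} (ω : Site d → Bool) {rank : Site d → Site d → ℕ}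
    {sel : ℕ → Site d → Site d} (hsel : IsSelection ω rank sel) {i i' : ℕ} (hii : i ≤ i')
    {q : Site d}
    (h : ((i' : ℕ∞) ≤ ellSucc ω (sel i q)) ∨ (1 ≤ i ∧ ellSucc ω (sel i q) < (i : ℕ∞))) :
    sel i' q = sel i q := by
  have hsmem : sel i q ∈ maximizers ω i q := (hsel.2 i q).1
  have hsn : sel i q ∈ nbhd q := maximizers_subset ω i q hsmem
  have hs'mem : sel i' q ∈ maximizers ω i' q := (hsel.2 i' q).1
  have hs'n : sel i' q ∈ nbhd q := maximizers_subset ω i' q hs'mem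
  rcases h with h | ⟨hi1, hlt⟩
  · rcases Nat.eq_zero_or_pos i' with h0 | h0
    · subst h0
      have hi0 : i = 0 := Nat.le_zero.mp hii
      subst hi0
      rfl
    · obtain ⟨c, rfl⟩ : ∃ c, i' = c + 1 := ⟨i' - 1, by omega⟩
      have hcap : ((c : ℕ∞) + 1) ≤ ellSucc ω (sel i q) := by
        have hc : ((c + 1 : ℕ) : ℕ∞) = (c : ℕ∞) + 1 := by push_cast; rfl
        rw [← hc]
        exact h
      have hsM : sel i q ∈ maximizers ω (c + 1) q :=
        mem_maximizers_of_cap_le ω hsn hcap hsn hcap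
      have hs'cap : ((c : ℕ∞) + 1) ≤ ellSucc ω (sel (c + 1) q) := by
        obtain ⟨-, hmax⟩ := hs'mem
        rw [sup_eq_cap ω hsn hcap] at hmax
        exact min_eq_right_iff.mp hmax
      have hs'Mi : sel (c + 1) q ∈ maximizers ω i q := by
        rcases Nat.eq_zero_or_pos i with hi0 | hi0
        · subst hi0
          exact hs'n
        · obtain ⟨b, rfl⟩ : ∃ b, i = b + 1 := ⟨i - 1, by omega⟩
          have hbc : ((b : ℕ∞) + 1) ≤ (c : ℕ∞) + 1 :=
            add_le_add_left (Nat.cast_le.mpr (by omega)) 1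
          exact mem_maximizers_of_cap_le ω hsn (le_trans hbc hcap) hs'n
            (le_trans hbc hs'cap)
      exact sel_eq_of_maximizers ω hsel hs'Mi hsM
  · obtain ⟨b, rfl⟩ : ∃ b, i = b + 1 := ⟨i - 1, by omega⟩
    have hlt' : ellSucc ω (sel (b + 1) q) < (b : ℕ∞) + 1 := by
      have hc : ((b + 1 : ℕ) : ℕ∞) = (b : ℕ∞) + 1 := by push_cast; rfl
      rw [← hc]
      exact hlt
    have hbound := maximizers_bound ω hsmem hlt'
    obtain ⟨c, rfl⟩ : ∃ c, i' = c + 1 := ⟨i' - 1, by omega⟩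
    have hbc : (b : ℕ∞) + 1 ≤ (c : ℕ∞) + 1 :=
      add_le_add_left (Nat.cast_le.mpr (by omega)) 1
    have hsupc : sSup ((fun r => min (ellSucc ω r) ((c : ℕ∞) + 1)) '' nbhd q)
        = ellSucc ω (sel (b + 1) q) := by
      apply le_antisymm
      · refine sSup_le ?_
        rintro t ⟨r, hr, rfl⟩
        exact le_trans (min_le_left _ _) (hbound r hr)
      · have hm : min (ellSucc ω (sel (b + 1) q)) ((c : ℕ∞) + 1)
            = ellSucc ω (sel (b + 1) q) := min_eq_left (le_trans hlt'.le hbc)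
        exact hm ▸ le_sSup ⟨sel (b + 1) q, hsn, rfl⟩
    have hsMc : sel (b + 1) q ∈ maximizers ω (c + 1) q :=
      ⟨hsn, by rw [min_eq_left (le_trans hlt'.le hbc), hsupc]⟩
    have hs'val : ellSucc ω (sel (c + 1) q) = ellSucc ω (sel (b + 1) q) := by
      obtain ⟨hn', hmax⟩ := hs'mem
      rw [hsupc, min_eq_left (le_trans (hbound _ hn') (le_trans hlt'.le hbc))] at hmax
      exact hmax
    have hs'Mb : sel (c + 1) q ∈ maximizers ω (b + 1) q := by
      refine ⟨hs'n, ?_⟩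
      have hsupb : sSup ((fun r => min (ellSucc ω r) ((b : ℕ∞) + 1)) '' nbhd q)
          = ellSucc ω (sel (b + 1) q) := by
        obtain ⟨-, hmax⟩ := hsmem
        rw [min_eq_left hlt'.le] at hmax
        exact hmax.symm
      rw [min_eq_left (hs'val.le.trans hlt'.le), hs'val, hsupb]
    exact sel_eq_of_maximizers ω hsel hs'Mb hsMc


/-- Fixation on the backbone: if `γ_k^{(x,n)}(j) ∈ C` for some `k ≥ 0` and `j ≤ k`, then
`γ_m^{(x,n)}(j) = γ_k^{(x,n)}(j)` for all `m > k`. -/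
theorem gammaPath_fixation (d : ℕ) (ω : Site d → Bool) (rank : Site d → Site d → ℕ)
    (sel : ℕ → Site d → Site d) (hsel : IsSelection ω rank sel)
    (p : Site d) (k j : ℕ) (hj : j ≤ k)
    (hC : gammaPath sel p k j ∈ backbone ω) :
    ∀ m, k < m → gammaPath sel p m j = gammaPath sel p k j := by
  intro m hm
  have hC' : ellSucc ω (gammaPath sel p k j) = ⊤ := hC
  have key : ∀ t j'', j'' + t = j → ellSucc ω (gammaPath sel p k j'') = ⊤ ∨
      (j'' < k ∧ ellSucc ω (gammaPath sel p k j'') < ((k - j'' : ℕ) : ℕ∞)) := by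
    intro t
    induction t with
    | zero =>
      intro j'' hj''
      rw [Nat.add_zero] at hj''
      subst hj''
      exact Or.inl hC'
    | succ t ih =>
      intro j'' hj''
      have hD := ih (j'' + 1) (by omega)
      have hj1k : j'' + 1 ≤ k := by omega
      have hgs : gammaPath sel p k (j'' + 1)
          = sel (k - j'' - 1) (gammaPath sel p k j'') := rfl
      rw [hgs] at hD
      set q := gammaPath sel p k j'' with hqdef
      have hsmem : sel (k - j'' - 1) q ∈ maximizers ω (k - j'' - 1) q := (hsel.2 _ _).1
      have hsn : sel (k - j'' - 1) q ∈ nbhd q := maximizers_subset ω _ _ hsmem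
      rcases hD with htop | ⟨h1, h2⟩
      · by_cases hopen : ω q = true
        · exact Or.inl (ellSucc_top_of_nbhd ω hopen hsn htop)
        · refine Or.inr ⟨by omega, ?_⟩
          rw [ellSucc_eq_zero ω hopen]
          exact_mod_cast Nat.pos_of_ne_zero (by omega)
      · obtain ⟨b, hb⟩ : ∃ b, k - j'' - 1 = b + 1 := ⟨k - j'' - 2, by omega⟩
        rw [hb] at hsmem hsn h2
        have h2' : ellSucc ω (sel (b + 1) q) < ((b : ℕ∞) + 1) := by
          have hcast : ((k - (j'' + 1) : ℕ) : ℕ∞) = (b : ℕ∞) + 1 := by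
            rw [show k - (j'' + 1) = b + 1 from by omega]
            push_cast
            rfl
          rw [hcast] at h2
          exact h2
        have hbound := maximizers_bound ω hsmem h2'
        have hq_le : ellSucc ω q ≤ ellSucc ω (sel (b + 1) q) + 1 :=
          ellSucc_le_of_nbhd ω hbound
        refine Or.inr ⟨by omega, ?_⟩
        have hfin : ellSucc ω (sel (b + 1) q) ≠ ⊤ := h2'.ne_top
        have hstep : ellSucc ω (sel (b + 1) q) + 1 ≤ (b : ℕ∞) + 1 :=
          (ENat.add_one_le_iff hfin).mpr h2'
        have hle : ellSucc ω q ≤ ((b + 1 : ℕ) : ℕ∞) := by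
          push_cast
          exact hq_le.trans hstep
        refine lt_of_le_of_lt hle ?_
        exact_mod_cast (by omega : b + 1 < k - j'')
  have main : ∀ j', j' ≤ j → gammaPath sel p m j' = gammaPath sel p k j' := by
    intro j'
    induction j' with
    | zero => intro _; rfl
    | succ j' ih =>
      intro hj'
      have hq := ih (by omega)
      have hgm : gammaPath sel p m (j' + 1)
          = sel (m - j' - 1) (gammaPath sel p m j') := rfl
      have hgk : gammaPath sel p k (j' + 1)
          = sel (k - j' - 1) (gammaPath sel p k j') := rfl
      rw [hgm, hq, hgk]
      have hkey := key (j - (j' + 1)) (j' + 1) (by omega)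
      rw [hgk] at hkey
      refine sel_stable ω hsel (by omega : k - j' - 1 ≤ m - j' - 1) ?_
      rcases hkey with htop | ⟨h1, h2⟩
      · left
        rw [htop]
        exact le_top
      · right
        refine ⟨by omega, ?_⟩
        have hcast : ((k - (j' + 1) : ℕ) : ℕ∞) = ((k - j' - 1 : ℕ) : ℕ∞) := by
          rw [Nat.sub_sub]
        rw [← hcast]
        exact h2
  exact main j le_rfl
end

section
/- Almost-sure convergence of the local construction: for almost every ω (under supercritical oriented percolation, where every site off the backbone has a finite longest-open-path length) and every ω̃, the limit γ_∞^{(x,n)}(j) = lim_{k→∞} γ_k^{(x,n)}(j) exists for every j ≥ 0, and γ_∞^{(x,n)}(j) ∈ C for all j. -/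
section Aux

variable {d : ℕ}

lemma nbhd_finite (p : Site d) : (nbhd p).Finite := by
  apply Set.Finite.subset
    (Set.Finite.prod (Set.Finite.pi fun i => Set.finite_Icc (p.1 i - 1) (p.1 i + 1))
      (Set.finite_singleton (p.2 + 1)))
  rintro ⟨y, m⟩ ⟨hm, hy⟩
  refine ⟨fun i _ => ?_, hm⟩
  have h := abs_le.mp (hy i)
  exact Set.mem_Icc.mpr ⟨by linarith [h.2], by linarith [h.1]⟩

lemma hasOpenPath_step (ω : Site d → Bool) (p : Site d) (k : ℕ)
    (h : hasOpenPath ω p (k + 1)) : ∃ q ∈ nbhd p, hasOpenPath ω q k := by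
  obtain ⟨γ, h0, hstep, hopen⟩ := h
  refine ⟨(γ 1, p.2 + 1), ⟨rfl, fun i => ?_⟩, fun j => γ (j + 1), rfl,
    fun j hj i => hstep (j + 1) (by omega) i, fun j hj => ?_⟩
  · have := hstep 0 (by omega) i
    rw [h0] at this
    rw [abs_sub_comm] at this
    simpa using this
  · have h1 := hopen (j + 1) (by omega)
    have h2 : p.2 + 1 + (j : ℤ) = p.2 + ((j + 1 : ℕ) : ℤ) := by push_cast; ring
    simpa [h2] using h1

lemma le_ellSucc_of_path (ω : Site d → Bool) (q : Site d) (k : ℕ)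
    (h : hasOpenPath ω q k) : (k : ℕ∞) + 1 ≤ ellSucc ω q :=
  le_sSup ⟨k, rfl, h⟩

lemma exists_bound (ω : Site d → Bool)
    (hfin : ∀ q : Site d, q ∉ backbone ω → ∃ L : ℕ, ellSucc ω q = (L : ℕ∞)) (p : Site d) :
    ∃ N : ℕ, ∀ q ∈ nbhd p, q ∉ backbone ω → ellSucc ω q ≤ (N : ℕ∞) := by
  have hT : (nbhd p ∩ {q | q ∉ backbone ω}).Finite :=
    (nbhd_finite p).subset Set.inter_subset_left
  refine ⟨hT.toFinset.sup fun q => (ellSucc ω q).toNat, fun q hq hq' => ?_⟩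
  have hmem : q ∈ hT.toFinset := hT.mem_toFinset.mpr ⟨hq, hq'⟩
  obtain ⟨L, hL⟩ := hfin q hq'
  have hne : ellSucc ω q ≠ ⊤ := by rw [hL]; exact ENat.coe_ne_top L
  calc ellSucc ω q = ((ellSucc ω q).toNat : ℕ∞) := (ENat.coe_toNat hne).symm
    _ ≤ _ := by
        exact_mod_cast Nat.cast_le.mpr
          (Finset.le_sup (f := fun q => (ellSucc ω q).toNat) hmem)

lemma backbone_nbhd_nonempty (ω : Site d → Bool) (p : Site d)
    (N : ℕ) (hN : ∀ q ∈ nbhd p, q ∉ backbone ω → ellSucc ω q ≤ (N : ℕ∞))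
    (hp : p ∈ backbone ω) : (nbhd p ∩ backbone ω).Nonempty := by
  have htop : sSup {t : ℕ∞ | ∃ k : ℕ, t = (k : ℕ∞) + 1 ∧ hasOpenPath ω p k} = ⊤ := hp
  obtain ⟨t, ht, hlt⟩ := (sSup_eq_top.mp htop) ((N : ℕ∞) + 1) (by
    have h : ((N + 1 : ℕ) : ℕ∞) < ⊤ := lt_top_iff_ne_top.mpr (ENat.coe_ne_top (N + 1))
    push_cast at h
    exact h)
  obtain ⟨k, rfl, hpath⟩ := ht
  have hkN : N < k := by
    have h : ((N + 1 : ℕ) : ℕ∞) < ((k + 1 : ℕ) : ℕ∞) := by push_cast; exact hlt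
    have := Nat.cast_lt.mp h
    omega
  obtain ⟨k', rfl⟩ : ∃ k', k = k' + 1 := ⟨k - 1, by omega⟩
  obtain ⟨q, hqn, hqpath⟩ := hasOpenPath_step ω p k' hpath
  refine ⟨q, hqn, ?_⟩
  by_contra hq
  have h1 := hN q hqn hq
  have h2 := le_ellSucc_of_path ω q k' hqpath
  have : ((k' + 1 : ℕ) : ℕ∞) ≤ (N : ℕ∞) := by
    push_cast
    exact le_trans h2 h1
  have := Nat.cast_le.mp this
  omega

lemma maximizers_stable (ω : Site d → Bool) (p : Site d)
    (N : ℕ) (hN : ∀ q ∈ nbhd p, q ∉ backbone ω → ellSucc ω q ≤ (N : ℕ∞))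
    (hS : (nbhd p ∩ backbone ω).Nonempty) (k : ℕ) (hk : N ≤ k) :
    maximizers ω (k + 1) p = nbhd p ∩ backbone ω := by
  have hNk : (N : ℕ∞) < (k : ℕ∞) + 1 := by
    have : ((N : ℕ) : ℕ∞) < ((k + 1 : ℕ) : ℕ∞) := Nat.cast_lt.mpr (by omega)
    push_cast at this
    exact this
  have hsup : sSup ((fun r => min (ellSucc ω r) ((k : ℕ∞) + 1)) '' nbhd p)
      = (k : ℕ∞) + 1 := by
    apply le_antisymm
    · exact sSup_le (by rintro t ⟨r, hr, rfl⟩; exact min_le_right _ _)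
    · obtain ⟨q, hqn, hqb⟩ := hS
      refine le_sSup ⟨q, hqn, ?_⟩
      have : ellSucc ω q = ⊤ := hqb
      simp [this]
  ext q
  simp only [maximizers, Set.mem_setOf_eq, Set.mem_inter_iff, hsup, Set.mem_sep_iff]
  constructor
  · rintro ⟨hqn, hq⟩
    refine ⟨hqn, ?_⟩
    by_contra hqb
    have h1 : min (ellSucc ω q) ((k : ℕ∞) + 1) ≤ (N : ℕ∞) :=
      le_trans (min_le_left _ _) (hN q hqn hqb)
    rw [hq] at h1
    exact absurd h1 (not_le.mpr hNk)
  · rintro ⟨hqn, hqb⟩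
    refine ⟨hqn, ?_⟩
    have : ellSucc ω q = ⊤ := hqb
    simp [this]

lemma sel_stable_s9 (ω : Site d → Bool) (rank : Site d → Site d → ℕ)
    (sel : ℕ → Site d → Site d) (hsel : IsSelection ω rank sel)
    (hfin : ∀ q : Site d, q ∉ backbone ω → ∃ L : ℕ, ellSucc ω q = (L : ℕ∞))
    (p : Site d) (hp : p ∈ backbone ω) :
    ∃ q ∈ backbone ω, ∃ K : ℕ, ∀ m, K ≤ m → sel m p = q := by
  obtain ⟨N, hN⟩ := exists_bound ω hfin p
  have hS := backbone_nbhd_nonempty ω p N hN hp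
  have hmax : ∀ m, N + 1 ≤ m → maximizers ω m p = nbhd p ∩ backbone ω := by
    intro m hm
    obtain ⟨k, rfl⟩ : ∃ k, m = k + 1 := ⟨m - 1, by omega⟩
    exact maximizers_stable ω p N hN hS k (by omega)
  refine ⟨sel (N + 1) p, ?_, N + 1, fun m hm => ?_⟩
  · have := (hsel.2 (N + 1) p).1
    rw [hmax (N + 1) le_rfl] at this
    exact this.2
  · obtain ⟨hmem, hmin⟩ := hsel.2 m p
    obtain ⟨hmemK, hminK⟩ := hsel.2 (N + 1) p
    rw [hmax m hm] at hmem hmin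
    rw [hmax (N + 1) le_rfl] at hmemK hminK
    have h1 : rank p (sel m p) ≤ rank p (sel (N + 1) p) := hmin _ hmemK
    have h2 : rank p (sel (N + 1) p) ≤ rank p (sel m p) := hminK _ hmem
    exact hsel.1 p hmem.1 hmemK.1 (le_antisymm h1 h2)

end Aux

/-- Convergence of the local construction (for any realization `ω` such that every site off
the backbone `C` has a finite longest-open-path length, which holds a.s. under supercritical
oriented percolation, and every realization of the permutations): started from `p ∈ C`,
the limit `γ_∞^{(x,n)}(j) = lim_{k→∞} γ_k^{(x,n)}(j)` exists for every `j ≥ 0`, i.e. the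
value `γ_k(j)` is eventually constant in `k`, and the limit lies on `C`. -/
theorem gammaPath_limit_exists (d : ℕ) (ω : Site d → Bool)
    (rank : Site d → Site d → ℕ) (sel : ℕ → Site d → Site d)
    (hsel : IsSelection ω rank sel)
    (hfin : ∀ q : Site d, q ∉ backbone ω → ∃ L : ℕ, ellSucc ω q = (L : ℕ∞))
    (p : Site d) (hp : p ∈ backbone ω) :
    ∀ j : ℕ, ∃ q ∈ backbone ω, ∃ K : ℕ, ∀ k, K ≤ k → gammaPath sel p k j = q := by
  intro j
  induction j with
  | zero => exact ⟨p, hp, 0, fun k _ => rfl⟩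
  | succ j ih =>
    obtain ⟨q, hq, K, hK⟩ := ih
    obtain ⟨q', hq', K', hK'⟩ := sel_stable_s9 ω rank sel hsel hfin q hq
    refine ⟨q', hq', max K (K' + j + 1), fun k hk => ?_⟩
    show sel (k - j - 1) (gammaPath sel p k j) = q'
    rw [hK k (le_trans (le_max_left _ _) hk)]
    exact hK' _ (by omega)
end
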